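/- Let θ, α be nonconstant inner functions, D ∈ B(K_θ^⊥, K_α^⊥), and g, h ∈ H². Then ⟨D(αθh), αθg⟩ = ⟨(P⁻ C_α M_{conj θ})|_{θH²} ∘ (P_{αH²} D|_{θH²})* ∘ (M_θ C_α)|_{H²₋} (conj(z)·conj(g)), conj(z)·conj(h)⟩. Consequently, the matrix corner identity P⁻ D|_{H²₋} = (P⁻ C_α M_{conj θ})|_{θH²} (P_{αH²} D|_{θH²})* (M_θ C_α)|_{H²₋} holds if and only if ⟨D, αθh ⊗ αθg − conj(z)conj(g) ⊗ conj(z)conj(h)⟩ = 0 for all g, h ∈ H², i.e., D annihilates the rank-two operators αθh ⊗ αθg − z̄ḡ ⊗ z̄h̄. -/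

import Mathlib

open MeasureTheory Complex ComplexConjugate

noncomputable section

instance : Fact (0 < 2 * Real.pi) := ⟨by positivity⟩

abbrev 𝕋 : Type := AddCircle (2 * Real.pi)

abbrev m : Measure 𝕋 := AddCircle.haarAddCircle

def e : 𝕋 → ℂ := fun x => fourier 1 x

def Hardy2 : Set (𝕋 → ℂ) :=
  {f | MemLp f 2 m ∧ ∀ n : ℤ, n < 0 → fourierCoeff f n = 0}

def Hardy2neg : Set (𝕋 → ℂ) :=
  {f | MemLp f 2 m ∧ ∀ n : ℤ, 0 ≤ n → fourierCoeff f n = 0}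

def thetaH2 (θ : 𝕋 → ℂ) : Set (𝕋 → ℂ) :=
  {g | ∃ h ∈ Hardy2, g =ᵐ[m] fun x => θ x * h x}

def Kmodel (θ : 𝕋 → ℂ) : Set (𝕋 → ℂ) :=
  {f | f ∈ Hardy2 ∧ ∀ g ∈ thetaH2 θ, ∫ x, f x * conj (g x) ∂m = 0}

def Kperp (θ : 𝕋 → ℂ) : Set (𝕋 → ℂ) :=
  {f | ∃ g ∈ thetaH2 θ, ∃ h ∈ Hardy2neg, f =ᵐ[m] fun x => g x + h x}

def Cfun (θ f : 𝕋 → ℂ) : 𝕋 → ℂ := fun x => θ x * conj (e x) * conj (f x)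

def Jfun (f : 𝕋 → ℂ) : 𝕋 → ℂ := fun x => conj (e x) * conj (f x)

def IsInner (θ : 𝕋 → ℂ) : Prop :=
  MemLp θ ⊤ m ∧ (∀ᵐ x ∂m, ‖θ x‖ = 1) ∧ ∀ n : ℤ, n < 0 → fourierCoeff θ n = 0

def NCInner (θ : 𝕋 → ℂ) : Prop := IsInner θ ∧ ¬∃ c : ℂ, θ =ᵐ[m] fun _ => c

def IsPneg (f g : 𝕋 → ℂ) : Prop :=
  g ∈ Hardy2neg ∧ ∀ n : ℤ, n < 0 → fourierCoeff g n = fourierCoeff f n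

def IsPpos (f g : 𝕋 → ℂ) : Prop :=
  g ∈ Hardy2 ∧ ∀ n : ℤ, 0 ≤ n → fourierCoeff g n = fourierCoeff f n

def IsProjOn (S : Set (𝕋 → ℂ)) (f g : 𝕋 → ℂ) : Prop :=
  g ∈ S ∧ ∀ u ∈ S, ∫ x, (f x - g x) * conj (u x) ∂m = 0

section Helpers

lemma norm_fourier_one (n : ℤ) (x : 𝕋) : ‖fourier n x‖ = 1 := by
  rw [fourier_apply]
  exact Circle.norm_coe _

lemma memTop_fourier (n : ℤ) : MemLp (⇑(fourier n) : 𝕋 → ℂ) ⊤ m :=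
  memLp_top_of_bound ((fourier n).continuous.aestronglyMeasurable) 1
    (Filter.Eventually.of_forall fun x => (norm_fourier_one n x).le)

lemma memℒp_conj {p : ENNReal} {f : 𝕋 → ℂ} (hf : MemLp f p m) :
    MemLp (fun x => conj (f x)) p m :=
  Complex.isometry_conj.lipschitz.comp_memLp (map_zero _) hf

lemma memL2_mul_top {φ f : 𝕋 → ℂ} (hφ : MemLp φ ⊤ m) (hf : MemLp f 2 m) :
    MemLp (fun x => φ x * f x) 2 m := by
  have h := hf.smul (p := ⊤) (r := 2) hφ
  exact h.ae_eq (Filter.Eventually.of_forall fun x => by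
    simp [Pi.smul_apply', smul_eq_mul])

lemma fourierCoeff_congr' {f g : 𝕋 → ℂ} (h : f =ᵐ[m] g) (n : ℤ) :
    fourierCoeff f n = fourierCoeff g n := by
  unfold fourierCoeff
  exact integral_congr_ae (h.mono fun x hx => by simp only [smul_eq_mul, hx])

lemma parseval {f g : 𝕋 → ℂ} (hf : MemLp f 2 m) (hg : MemLp g 2 m) :
    ∫ x, f x * conj (g x) ∂m
      = ∑' n : ℤ, fourierCoeff f n * conj (fourierCoeff g n) := by
  have h1 : ∫ x, f x * conj (g x) ∂m
      = @inner ℂ _ _ (hg.toLp g) (hf.toLp f) := by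
    rw [MeasureTheory.L2.inner_def]
    refine (integral_congr_ae ?_).symm
    filter_upwards [hf.coeFn_toLp, hg.coeFn_toLp] with x hx hy
    rw [RCLike.inner_apply, hx, hy]
  rw [h1, ← fourierBasis.tsum_inner_mul_inner (hg.toLp g) (hf.toLp f)]
  refine tsum_congr fun n => ?_
  have hF : @inner ℂ _ _ (fourierBasis n) (hf.toLp f) = fourierCoeff f n := by
    rw [← fourierBasis.repr_apply_apply, fourierBasis_repr,
      fourierCoeff_congr' hf.coeFn_toLp]
  have hG : @inner ℂ _ _ (hg.toLp g) (fourierBasis n)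
      = conj (fourierCoeff g n) := by
    rw [← inner_conj_symm, ← fourierBasis.repr_apply_apply, fourierBasis_repr,
      fourierCoeff_congr' hg.coeFn_toLp]
  rw [hF, hG, mul_comm]

lemma fourierCoeff_conj' (f : 𝕋 → ℂ) (n : ℤ) :
    fourierCoeff (fun x => conj (f x)) n = conj (fourierCoeff f (-n)) := by
  unfold fourierCoeff
  rw [← integral_conj]
  refine integral_congr_ae (Filter.Eventually.of_forall fun x => ?_)
  simp only [smul_eq_mul, map_mul, neg_neg, ← fourier_neg]

lemma fourierCoeff_fourier_mul' (k : ℤ) (f : 𝕋 → ℂ) (n : ℤ) :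
    fourierCoeff (fun x => fourier k x * f x) n = fourierCoeff f (n - k) := by
  unfold fourierCoeff
  refine integral_congr_ae (Filter.Eventually.of_forall fun x => ?_)
  simp only [smul_eq_mul]
  rw [← mul_assoc, ← fourier_add, show -n + k = -(n - k) from by ring]

lemma integral_fourier_zero {n : ℤ} (hn : n ≠ 0) :
    ∫ x : 𝕋, fourier n x ∂m = 0 :=
  integral_eq_zero_of_add_right_eq_neg
    (fourier_add_half_inv_index hn Fact.out)

lemma fourierCoeff_fourier_ne {k j : ℤ} (h : j ≠ k) :
    fourierCoeff (⇑(fourier k) : 𝕋 → ℂ) j = 0 := by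
  unfold fourierCoeff
  have h1 : ∀ x : 𝕋, fourier (-j) x • (fourier k) x = fourier (-j + k) x := fun x => by
    rw [smul_eq_mul, ← fourier_add]
  rw [integral_congr_ae (Filter.Eventually.of_forall fun x => by
    simp only [smul_eq_mul]; rw [← fourier_add])]
  exact integral_fourier_zero (by omega)

lemma fourier_mem_Hardy2 {k : ℤ} (hk : 0 ≤ k) : (⇑(fourier k) : 𝕋 → ℂ) ∈ Hardy2 :=
  ⟨(memTop_fourier k).mono_exponent le_top,
    fun j hj => fourierCoeff_fourier_ne (by omega)⟩

lemma conj_e_mul_e (x : 𝕋) : conj (e x) * e x = 1 := by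
  have h : ‖e x‖ = 1 := norm_fourier_one 1 x
  rw [mul_comm, Complex.mul_conj, Complex.normSq_eq_norm_sq, h]
  norm_num

lemma coeff_w {h : 𝕋 → ℂ} (hh : h ∈ Hardy2) (n : ℤ) (hn : 0 ≤ n) :
    fourierCoeff (fun x => conj (e x * h x)) n = 0 := by
  rw [fourierCoeff_conj' (fun x => e x * h x) n,
    show (fun x : 𝕋 => e x * h x) = fun x => fourier 1 x * h x from rfl,
    fourierCoeff_fourier_mul', hh.2 _ (by omega), map_zero]

lemma pair_eh {q p h : 𝕋 → ℂ} (hq : MemLp q 2 m) (hp : MemLp p 2 m)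
    (hh : h ∈ Hardy2) (hc : ∀ n : ℤ, n < 0 → fourierCoeff p n = fourierCoeff q n) :
    ∫ x, q x * (e x * h x) ∂m = ∫ x, p x * (e x * h x) ∂m := by
  have hw : MemLp (fun x => conj (e x * h x)) 2 m :=
    memℒp_conj (memL2_mul_top (memTop_fourier 1) hh.1)
  have key : ∀ r : 𝕋 → ℂ, MemLp r 2 m → ∫ x, r x * (e x * h x) ∂m
      = ∑' n : ℤ, fourierCoeff r n
          * conj (fourierCoeff (fun x => conj (e x * h x)) n) := by
    intro r hr
    rw [← parseval hr hw]
    refine integral_congr_ae (Filter.Eventually.of_forall fun x => ?_)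
    simp [Complex.conj_conj]
  rw [key q hq, key p hp]
  refine tsum_congr fun n => ?_
  rcases lt_or_ge n 0 with hn | hn
  · rw [hc n hn]
  · rw [coeff_w hh n hn, map_zero, mul_zero, mul_zero]

lemma mul_Hardy2 {θ h : 𝕋 → ℂ} (hθ : IsInner θ) (hh : h ∈ Hardy2) :
    (fun x => θ x * h x) ∈ Hardy2 := by
  have hθ2 : MemLp θ 2 m := hθ.1.mono_exponent le_top
  refine ⟨memL2_mul_top hθ.1 hh.1, fun n hn => ?_⟩
  have hw : MemLp (fun x => conj (fourier (-n) x * h x)) 2 m :=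
    memℒp_conj (memL2_mul_top (memTop_fourier _) hh.1)
  have h1 : fourierCoeff (fun x => θ x * h x) n
      = ∫ x, θ x * conj (conj (fourier (-n) x * h x)) ∂m := by
    unfold fourierCoeff
    refine integral_congr_ae (Filter.Eventually.of_forall fun x => ?_)
    simp only [smul_eq_mul, Complex.conj_conj]
    ring
  rw [h1, parseval hθ2 hw]
  have h2 : ∀ j : ℤ, fourierCoeff θ j
      * conj (fourierCoeff (fun x => conj (fourier (-n) x * h x)) j) = 0 := by
    intro j
    rcases lt_or_ge j 0 with hj | hj
    · rw [hθ.2.2 j hj, zero_mul]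
    · rw [fourierCoeff_conj' (fun x => fourier (-n) x * h x) j,
        fourierCoeff_fourier_mul', hh.2 _ (by omega), map_zero, map_zero, mul_zero]
  rw [tsum_congr h2, tsum_zero]

lemma conj_mem_H2neg {g : 𝕋 → ℂ} (hg : g ∈ Hardy2) :
    (fun x => conj (e x) * conj (g x)) ∈ Hardy2neg := by
  refine ⟨memL2_mul_top (memℒp_conj (memTop_fourier 1)) (memℒp_conj hg.1),
    fun n hn => ?_⟩
  have h1 : (fun x : 𝕋 => conj (e x) * conj (g x)) = fun x => conj (e x * g x) := by
    funext x; rw [map_mul]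
  rw [h1, fourierCoeff_conj' (fun x => e x * g x) n,
    show (fun x : 𝕋 => e x * g x) = fun x => fourier 1 x * g x from rfl,
    fourierCoeff_fourier_mul', hg.2 _ (by omega), map_zero]

lemma fourierCoeff_zero' (n : ℤ) : fourierCoeff (fun _ : 𝕋 => (0 : ℂ)) n = 0 := by
  unfold fourierCoeff
  have h : (fun t : 𝕋 => fourier (-n) t • (fun _ : 𝕋 => (0 : ℂ)) t) = fun _ => (0 : ℂ) := by
    funext t; simp
  rw [h, integral_zero]

lemma zero_mem_Hardy2 : (fun _ : 𝕋 => (0 : ℂ)) ∈ Hardy2 :=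
  ⟨memLp_const 0, fun n _ => fourierCoeff_zero' n⟩

lemma zero_mem_H2neg : (fun _ : 𝕋 => (0 : ℂ)) ∈ Hardy2neg :=
  ⟨memLp_const 0, fun n _ => fourierCoeff_zero' n⟩

lemma zero_mem_thetaH2 (θ : 𝕋 → ℂ) : (fun _ : 𝕋 => (0 : ℂ)) ∈ thetaH2 θ :=
  ⟨fun _ => 0, zero_mem_Hardy2, Filter.Eventually.of_forall fun x => by simp⟩

lemma thetaH2_subset_Kperp {θ f : 𝕋 → ℂ} (hf : f ∈ thetaH2 θ) : f ∈ Kperp θ :=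
  ⟨f, hf, fun _ => 0, zero_mem_H2neg, Filter.Eventually.of_forall fun x => by simp⟩

lemma H2neg_subset_Kperp {θ f : 𝕋 → ℂ} (hf : f ∈ Hardy2neg) : f ∈ Kperp θ :=
  ⟨fun _ => 0, zero_mem_thetaH2 θ, f, hf, Filter.Eventually.of_forall fun x => by simp⟩

lemma memL2_of_thetaH2 {θ f : 𝕋 → ℂ} (hθ : IsInner θ) (hf : f ∈ thetaH2 θ) :
    MemLp f 2 m := by
  obtain ⟨h, hh, hae⟩ := hf
  exact MemLp.ae_eq hae.symm (memL2_mul_top hθ.1 hh.1)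

lemma memL2_of_Kperp {θ f : 𝕋 → ℂ} (hθ : IsInner θ) (hf : f ∈ Kperp θ) :
    MemLp f 2 m := by
  obtain ⟨g, hg, h, hh, hae⟩ := hf
  exact MemLp.ae_eq hae.symm ((memL2_of_thetaH2 hθ hg).add hh.1)

lemma exists_Pneg {f : 𝕋 → ℂ} (hf : MemLp f 2 m) : ∃ p, IsPneg f p := by
  set a := fourierBasis.repr (hf.toLp f) with ha
  have hsum : Summable fun n : ℤ => ‖a n‖ ^ (2 : ENNReal).toReal :=
    (memℓp_gen_iff (by norm_num)).1 (lp.memℓp a)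
  have hb : Memℓp (fun n : ℤ => if n < 0 then a n else 0) 2 := by
    apply memℓp_gen
    refine Summable.of_nonneg_of_le (fun n => by positivity) (fun n => ?_) hsum
    split_ifs
    · exact le_rfl
    · simp only [norm_zero]
      rw [Real.zero_rpow (by norm_num)]
      positivity
  set p0 := (@fourierBasis (2 * Real.pi) _).repr.symm (⟨_, hb⟩ : lp (fun _ : ℤ => ℂ) 2) with hp0
  have hcoeff : ∀ k : ℤ, fourierCoeff (⇑p0) k = if k < 0 then a k else 0 := by
    intro k
    rw [← fourierBasis_repr, hp0, LinearIsometryEquiv.apply_symm_apply]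
  refine ⟨⇑p0, ⟨⟨Lp.memLp _, fun n hn => ?_⟩, fun n hn => ?_⟩⟩
  · rw [hcoeff n, if_neg (by omega)]
  · rw [hcoeff n, if_pos hn, ha, fourierBasis_repr,
      fourierCoeff_congr' hf.coeFn_toLp]

lemma integral_mul_e_fourier (f : 𝕋 → ℂ) (k : ℤ) :
    ∫ x, f x * (e x * fourier k x) ∂m = fourierCoeff f (-(1 + k)) := by
  unfold fourierCoeff
  refine integral_congr_ae (Filter.Eventually.of_forall fun x => ?_)
  simp only [smul_eq_mul, neg_neg, e]
  rw [← fourier_add, mul_comm]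

end Helpers

lemma Fmem {θ α : 𝕋 → ℂ} (hθ : IsInner θ) (hα : IsInner α) {A : 𝕋 → ℂ}
    (hA : A ∈ thetaH2 θ) :
    MemLp (fun x => α x * conj (e x) * conj (conj (θ x) * A x)) 2 m := by
  obtain ⟨h₀, hh₀, hae₀⟩ := hA
  have hgood : MemLp
      (fun x => α x * (conj (e x) * (θ x * (conj (θ x) * conj (h₀ x))))) 2 m :=
    memL2_mul_top hα.1 (memL2_mul_top (memℒp_conj (memTop_fourier 1))
      (memL2_mul_top hθ.1 (memL2_mul_top (memℒp_conj hθ.1) (memℒp_conj hh₀.1))))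
  refine MemLp.ae_eq ?_ hgood
  filter_upwards [hae₀] with x hx
  rw [hx, map_mul, map_mul, Complex.conj_conj]
  ring

lemma part1 {θ α : 𝕋 → ℂ} (hθ : NCInner θ) (hα : NCInner α)
    (D Astar : (𝕋 → ℂ) → (𝕋 → ℂ))
    (hAstar : ∀ v ∈ thetaH2 α, Astar v ∈ thetaH2 θ)
    (hadjA : ∀ u ∈ thetaH2 θ, ∀ v ∈ thetaH2 α,
      ∫ x, D u x * conj (v x) ∂m = ∫ x, u x * conj (Astar v x) ∂m)
    {g h p : 𝕋 → ℂ} (hg : g ∈ Hardy2) (hh : h ∈ Hardy2)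
    (hp : IsPneg (fun x => α x * conj (e x) *
        conj (conj (θ x) * Astar (fun y => θ y * (α y * g y)) x)) p) :
    ∫ x, D (fun y => α y * (θ y * h y)) x * conj (α x * (θ x * g x)) ∂m
      = ∫ x, p x * (e x * h x) ∂m := by
  have hv : (fun y => θ y * (α y * g y)) ∈ thetaH2 α :=
    ⟨fun y => θ y * g y, mul_Hardy2 hθ.1 hg,
      Filter.Eventually.of_forall fun y => by ring⟩
  have hu : (fun y => α y * (θ y * h y)) ∈ thetaH2 θ :=
    ⟨fun y => α y * h y, mul_Hardy2 hα.1 hh,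
      Filter.Eventually.of_forall fun y => by ring⟩
  have hFmem : MemLp (fun x => α x * conj (e x) *
      conj (conj (θ x) * Astar (fun y => θ y * (α y * g y)) x)) 2 m :=
    Fmem hθ.1 hα.1 (hAstar _ hv)
  have step1 : ∫ x, D (fun y => α y * (θ y * h y)) x * conj (α x * (θ x * g x)) ∂m
      = ∫ x, D (fun y => α y * (θ y * h y)) x * conj (θ x * (α x * g x)) ∂m := by
    refine integral_congr_ae (Filter.Eventually.of_forall fun x => ?_)
    simp only [show α x * (θ x * g x) = θ x * (α x * g x) from by ring]
  have step2 := hadjA _ hu _ hv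
  have step3 : ∫ x, (fun y => α y * (θ y * h y)) x
        * conj (Astar (fun y => θ y * (α y * g y)) x) ∂m
      = ∫ x, (fun x => α x * conj (e x) *
          conj (conj (θ x) * Astar (fun y => θ y * (α y * g y)) x)) x
          * (e x * h x) ∂m := by
    refine integral_congr_ae (Filter.Eventually.of_forall fun x => ?_)
    simp only [map_mul, Complex.conj_conj]
    have he := conj_e_mul_e x
    calc α x * (θ x * h x) * conj (Astar (fun y => θ y * (α y * g y)) x)
        = (conj (e x) * e x) * (α x * (θ x * h x)
            * conj (Astar (fun y => θ y * (α y * g y)) x)) := by rw [he, one_mul]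
      _ = _ := by ring
  have step4 := pair_eh hFmem hp.1.1 hh hp.2
  exact ((step1.trans step2).trans step3).trans step4

/-- Lemma on rank-two annihilation for the lower-right corner: with
X = (P⁻ C_α M_{conj θ})|_{θH²} ∘ (P_{αH²} D|_{θH²})* ∘ (M_θ C_α)|_{H²₋} one has
⟨D(αθh), αθg⟩ = ⟨X(conj(z)conj(g)), conj(z)conj(h)⟩, and
P⁻ D|_{H²₋} = X  iff  ⟨D, αθh ⊗ αθg − conj(z)conj(g) ⊗ conj(z)conj(h)⟩ = 0 for all g, h ∈ H². -/
theorem stmt15 (θ α : 𝕋 → ℂ) (hθ : NCInner θ) (hα : NCInner α)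
    (D Astar : (𝕋 → ℂ) → (𝕋 → ℂ))
    (hD : ∀ f ∈ Kperp θ, D f ∈ Kperp α)
    (hDae : ∀ f g : 𝕋 → ℂ, f ∈ Kperp θ → g ∈ Kperp θ → f =ᵐ[m] g → D f =ᵐ[m] D g)
    (hAstar : ∀ v ∈ thetaH2 α, Astar v ∈ thetaH2 θ)
    (hadjA : ∀ u ∈ thetaH2 θ, ∀ v ∈ thetaH2 α,
      ∫ x, D u x * conj (v x) ∂m = ∫ x, u x * conj (Astar v x) ∂m) :
    (∀ g ∈ Hardy2, ∀ h ∈ Hardy2, ∀ p : 𝕋 → ℂ,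
      IsPneg (fun x => α x * conj (e x) *
          conj (conj (θ x) * Astar (fun y => θ y * (α y * g y)) x)) p →
      ∫ x, D (fun y => α y * (θ y * h y)) x * conj (α x * (θ x * g x)) ∂m
        = ∫ x, p x * (e x * h x) ∂m) ∧
    ((∀ g ∈ Hardy2, ∀ p : 𝕋 → ℂ,
        IsPneg (fun x => α x * conj (e x) *
            conj (conj (θ x) * Astar (fun y => θ y * (α y * g y)) x)) p →
        IsPneg (D (fun y => conj (e y) * conj (g y))) p)
      ↔ ∀ g ∈ Hardy2, ∀ h ∈ Hardy2,
          ∫ x, D (fun y => α y * (θ y * h y)) x * conj (α x * (θ x * g x)) ∂m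
            = ∫ x, D (fun y => conj (e y) * conj (g y)) x
                * conj (conj (e x) * conj (h x)) ∂m) := by
  refine ⟨fun g hg h hh p hp => part1 hθ hα D Astar hAstar hadjA hg hh hp, ⟨?_, ?_⟩⟩
  · intro hyp g hg h hh
    have hgK : (fun y => conj (e y) * conj (g y)) ∈ Kperp θ :=
      H2neg_subset_Kperp (conj_mem_H2neg hg)
    have hq2 : MemLp (D (fun y => conj (e y) * conj (g y))) 2 m :=
      memL2_of_Kperp hα.1 (hD _ hgK)
    have hv : (fun y => θ y * (α y * g y)) ∈ thetaH2 α :=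
      ⟨fun y => θ y * g y, mul_Hardy2 hθ.1 hg,
        Filter.Eventually.of_forall fun y => by ring⟩
    obtain ⟨p, hp⟩ := exists_Pneg (Fmem hθ.1 hα.1 (hAstar _ hv))
    have h1 := part1 hθ hα D Astar hAstar hadjA hg hh hp
    have h2 : IsPneg (D (fun y => conj (e y) * conj (g y))) p := hyp g hg p hp
    rw [h1]
    have h3 : ∫ x, D (fun y => conj (e y) * conj (g y)) x
        * conj (conj (e x) * conj (h x)) ∂m
        = ∫ x, D (fun y => conj (e y) * conj (g y)) x * (e x * h x) ∂m := by
      refine integral_congr_ae (Filter.Eventually.of_forall fun x => ?_)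
      simp only [map_mul, Complex.conj_conj]
    rw [h3]
    exact (pair_eh hq2 hp.1.1 hh h2.2).symm
  · intro hyp g hg p hp
    refine ⟨hp.1, fun n hn => ?_⟩
    have hhH2 : (⇑(fourier (-n - 1)) : 𝕋 → ℂ) ∈ Hardy2 :=
      fourier_mem_Hardy2 (by omega)
    have h1 := part1 hθ hα D Astar hAstar hadjA hg hhH2 hp
    have h2 := hyp g hg _ hhH2
    have h3 : ∫ x, D (fun y => conj (e y) * conj (g y)) x
        * conj (conj (e x) * conj (fourier (-n - 1) x)) ∂m
        = ∫ x, D (fun y => conj (e y) * conj (g y)) x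
            * (e x * fourier (-n - 1) x) ∂m := by
      refine integral_congr_ae (Filter.Eventually.of_forall fun x => ?_)
      simp only [map_mul, Complex.conj_conj]
    have e1 : ∫ x, p x * (e x * fourier (-n - 1) x) ∂m = fourierCoeff p n := by
      rw [integral_mul_e_fourier]
      congr 1
      ring
    have e2 : ∫ x, D (fun y => conj (e y) * conj (g y)) x
        * (e x * fourier (-n - 1) x) ∂m
        = fourierCoeff (D (fun y => conj (e y) * conj (g y))) n := by
      rw [integral_mul_e_fourier]
      congr 1
      ring
    rw [← e1, ← h1, h2, h3, e2]
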